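/- Let A, B, C, D ∈ ℂ with C ≠ 0 and |A| > 1, and set ψ̂(z) = conj(C)·e^{conj(B)·z}, φ̂(z) = conj(A)·z + conj(D). Then there exists a constant L > 0 such that for every entire function f ∈ F² with ψ̂·(f∘φ̂) ∈ F², one has ∫_ℂ |f(z)|²·e^{−|z|²} dV(z) ≤ L²·∫_ℂ |ψ̂(z)·f(φ̂(z))|²·e^{−|z|²} dV(z). -/

import Mathlib

set_option maxHeartbeats 1000000
open MeasureTheory Complex ComplexConjugate

lemma map_affine_vol (a b : ℂ) (ha : a ≠ 0) :
    Measure.map (fun u : ℂ => a * u + b) volume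
      = ENNReal.ofReal (Complex.normSq a)⁻¹ • volume := by
  have hdet : LinearMap.det ((Algebra.lmul ℝ ℂ) a) = Complex.normSq a := by
    rw [← Algebra.norm_apply, Algebra.norm_complex_apply]
  have hd0 : LinearMap.det ((Algebra.lmul ℝ ℂ) a) ≠ 0 := by
    rw [hdet]; exact ne_of_gt (normSq_pos.2 ha)
  have h1 : Measure.map (fun u : ℂ => a * u) volume
      = ENNReal.ofReal (Complex.normSq a)⁻¹ • volume := by
    have := Measure.map_linearMap_addHaar_eq_smul_addHaar (volume : Measure ℂ) hd0
    rw [hdet] at this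
    rw [show (fun u : ℂ => a * u) = ⇑((Algebra.lmul ℝ ℂ) a) by ext u; simp, this,
      _root_.abs_of_nonneg (inv_nonneg.2 (Complex.normSq_nonneg a))]
  have hcomp : (fun u : ℂ => a * u + b) = (fun z : ℂ => z + b) ∘ (fun u : ℂ => a * u) := rfl
  rw [hcomp, ← Measure.map_map (measurable_add_const b) (measurable_const_mul a), h1,
    Measure.map_smul, (measurePreserving_add_right volume b).map_eq]

lemma lintegral_affine_vol (a b : ℂ) (ha : a ≠ 0) {g : ℂ → ENNReal} (hg : Measurable g) :
    ∫⁻ z, g z = ENNReal.ofReal (Complex.normSq a) * ∫⁻ u, g (a * u + b) := by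
  have hT : Measurable fun u : ℂ => a * u + b :=
    (measurable_const_mul a).add_const b
  have hpos : 0 < Complex.normSq a := normSq_pos.2 ha
  rw [← lintegral_map hg hT, map_affine_vol a b ha, lintegral_smul_measure, smul_eq_mul, ← mul_assoc,
    ← ENNReal.ofReal_mul hpos.le, mul_inv_cancel₀ hpos.ne', ENNReal.ofReal_one, one_mul]

/-- for `|A| > 1`, the norm lower bound `L ‖W_{ψ̂,φ̂,max} f‖ ≥ ‖f‖`, showing
the adjoint of `W_{ψ,φ,max}` has closed range. -/
theorem wco_adjoint_lower_bound (A B C D : ℂ) (hC : C ≠ 0) (hA : 1 < ‖A‖)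
    (ψh φh : ℂ → ℂ)
    (hψh : ∀ z : ℂ, ψh z = conj C * Complex.exp (conj B * z))
    (hφh : ∀ z : ℂ, φh z = conj A * z + conj D) :
    ∃ L : ℝ, 0 < L ∧ ∀ f : ℂ → ℂ, Differentiable ℂ f →
      (∫⁻ z : ℂ, ENNReal.ofReal
          ((‖f z‖) ^ 2 * Real.exp (-(‖z‖) ^ 2)) < ⊤) →
      (∫⁻ z : ℂ, ENNReal.ofReal
          ((‖ψh z * f (φh z)‖) ^ 2 * Real.exp (-(‖z‖) ^ 2)) < ⊤) →
      (∫⁻ z : ℂ, ENNReal.ofReal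
          ((‖f z‖) ^ 2 * Real.exp (-(‖z‖) ^ 2))) ≤
        ENNReal.ofReal (L ^ 2) * ∫⁻ z : ℂ, ENNReal.ofReal
          ((‖ψh z * f (φh z)‖) ^ 2 * Real.exp (-(‖z‖) ^ 2)) := by
  set a : ℂ := conj A with ha_def
  set b : ℂ := conj D with hb_def
  have ha : a ≠ 0 := by
    simp only [ha_def, ne_eq, map_eq_zero]
    intro h; rw [h] at hA; simp at hA; linarith
  have habsA : ‖a‖ = ‖A‖ := Complex.norm_conj A
  -- the constant
  set ε : ℝ := (‖A‖) ^ 2 - 1 with hε_def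
  have hε : 0 < ε := by nlinarith
  set c : ℝ := 2 * ‖A‖ * ‖D‖ + 2 * ‖B‖ with hc_def
  have hc : 0 ≤ c := by positivity
  set M : ℝ := c ^ 2 / (4 * ε) with hM_def
  set K : ℝ := Real.exp M / Complex.normSq C with hK_def
  have hCpos : 0 < Complex.normSq C := normSq_pos.2 hC
  have hK : 0 < K := by positivity
  have haK : 0 < Complex.normSq a * K := mul_pos (normSq_pos.2 ha) hK
  set L : ℝ := Real.sqrt (Complex.normSq a * K) with hL_def
  have hL2 : L ^ 2 = Complex.normSq a * K := by
    rw [hL_def, Real.sq_sqrt haK.le]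
  refine ⟨L, Real.sqrt_pos.2 haK, ?_⟩
  intro f hf _ _
  have hfc : Continuous f := hf.continuous
  set g : ℂ → ENNReal := fun z =>
    ENNReal.ofReal ((‖f z‖) ^ 2 * Real.exp (-(‖z‖) ^ 2)) with hg_def
  have hg : Measurable g := by
    apply Measurable.ennreal_ofReal
    exact ((continuous_norm.comp hfc).pow 2).measurable.mul
      (Real.continuous_exp.comp
        (continuous_neg.comp (continuous_norm.pow 2))).measurable
  -- change of variables
  have step1 : (∫⁻ z : ℂ, g z) = ENNReal.ofReal (Complex.normSq a) * ∫⁻ u, g (a * u + b) :=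
    lintegral_affine_vol a b ha hg
  -- pointwise bound
  have key : ∀ u : ℂ, g (a * u + b) ≤ ENNReal.ofReal K *
      ENNReal.ofReal ((‖ψh u * f (φh u)‖) ^ 2 * Real.exp (-(‖u‖) ^ 2)) := by
    intro u
    rw [← ENNReal.ofReal_mul hK.le]
    apply ENNReal.ofReal_le_ofReal
    have hφu : φh u = a * u + b := hφh u
    rw [← hφu]
    -- expand the ψh part
    have habs : (‖ψh u * f (φh u)‖) ^ 2
        = Complex.normSq C * Real.exp (2 * (conj B * u).re) * (‖f (φh u)‖) ^ 2 := by
      rw [hψh u, norm_mul, norm_mul, Complex.norm_exp, Complex.norm_conj]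
      rw [mul_pow, mul_pow, ← Real.exp_nat_mul, Complex.sq_norm]
      ring_nf
    rw [habs]
    -- the exponent inequality
    set t : ℝ := ‖u‖ with ht_def
    set s : ℝ := ‖φh u‖ with hs_def
    have ht : 0 ≤ t := norm_nonneg u
    have hs : 0 ≤ s := norm_nonneg _
    have hre : -(‖B‖ * t) ≤ (conj B * u).re := by
      have := (abs_le.1 (Complex.abs_re_le_norm (conj B * u))).1
      rwa [norm_mul, Complex.norm_conj] at this
    have hs2 : (‖A‖) ^ 2 * t ^ 2 - 2 * ‖A‖ * ‖D‖ * t ≤ s ^ 2 := by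
      have hexp : Complex.normSq (a * u + b)
          = Complex.normSq (a * u) + Complex.normSq b + 2 * ((a * u) * conj b).re :=
        Complex.normSq_add (a * u) b
      have h1 : -(‖A‖ * t * ‖D‖) ≤ ((a * u) * conj b).re := by
        have h0 := (abs_le.1 (Complex.abs_re_le_norm ((a * u) * conj b))).1
        have habsb : ‖(a * u) * conj b‖ = ‖A‖ * t * ‖D‖ := by
          rw [ht_def, ha_def, hb_def]
          simp [norm_mul]
        rwa [habsb] at h0
      have h2 : s ^ 2 = Complex.normSq (a * u + b) := by
        rw [hs_def, Complex.sq_norm, hφu]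
      have h3 : Complex.normSq (a * u) = (‖A‖) ^ 2 * t ^ 2 := by
        rw [← Complex.sq_norm, norm_mul, habsA, mul_pow]
      have h4 : 0 ≤ Complex.normSq b := Complex.normSq_nonneg b
      nlinarith
    have hexp_ineq : t ^ 2 - 2 * (conj B * u).re - s ^ 2 ≤ M := by
      have h5 : t ^ 2 - 2 * (conj B * u).re - s ^ 2 ≤ -ε * t ^ 2 + c * t := by
        rw [hε_def, hc_def]; nlinarith [hre, hs2]
      have h6 : -ε * t ^ 2 + c * t ≤ M := by
        rw [hM_def, le_div_iff₀ (by linarith : (0:ℝ) < 4 * ε)]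
        nlinarith [sq_nonneg (2 * ε * t - c)]
      linarith
    -- combine
    have hfsq : 0 ≤ (‖f (φh u)‖) ^ 2 := by positivity
    have hKC : K * (Complex.normSq C * Real.exp (2 * (conj B * u).re) *
          (‖f (φh u)‖) ^ 2 * Real.exp (-t ^ 2))
        = (‖f (φh u)‖) ^ 2 * Real.exp (M + 2 * (conj B * u).re - t ^ 2) := by
      rw [hK_def]
      rw [show M + 2 * (conj B * u).re - t ^ 2
          = M + (2 * (conj B * u).re + -t ^ 2) by ring, Real.exp_add, Real.exp_add]
      field_simp
    calc (‖f (φh u)‖) ^ 2 * Real.exp (-s ^ 2)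
        ≤ (‖f (φh u)‖) ^ 2 * Real.exp (M + 2 * (conj B * u).re - t ^ 2) := by
          apply mul_le_mul_of_nonneg_left _ hfsq
          apply Real.exp_le_exp.2
          linarith
      _ = K * (Complex.normSq C * Real.exp (2 * (conj B * u).re) *
            (‖f (φh u)‖) ^ 2 * Real.exp (-t ^ 2)) := hKC.symm
      _ = K * (Complex.normSq C * Real.exp (2 * (conj B * u).re) *
            (‖f (φh u)‖) ^ 2 * Real.exp (-(‖u‖) ^ 2)) := by rw [ht_def]
  -- integrate
  calc (∫⁻ z : ℂ, g z)
      = ENNReal.ofReal (Complex.normSq a) * ∫⁻ u, g (a * u + b) := step1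
    _ ≤ ENNReal.ofReal (Complex.normSq a) * ∫⁻ u, ENNReal.ofReal K *
          ENNReal.ofReal ((‖ψh u * f (φh u)‖) ^ 2
            * Real.exp (-(‖u‖) ^ 2)) := by
        exact mul_le_mul_right (lintegral_mono key) _
    _ = ENNReal.ofReal (L ^ 2) * ∫⁻ z : ℂ, ENNReal.ofReal
          ((‖ψh z * f (φh z)‖) ^ 2 * Real.exp (-(‖z‖) ^ 2)) := by
        rw [lintegral_const_mul' _ _ ENNReal.ofReal_ne_top, ← mul_assoc,
          ← ENNReal.ofReal_mul (Complex.normSq_nonneg a), hL2]
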